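/- Let $\bar{X}, X \in \mathbb{R}^{t \times d}$, $\varepsilon \in \mathbb{R}^t$, $\theta^* \in \mathbb{R}^d$, $\rho > 0$, and set $y = \bar{X}\theta^* + \varepsilon$, $\Omega = \rho I + X^\top X$, $\hat{\theta} = \Omega^{-1}X^\top y$. Then $\|\hat{\theta} - \theta^*\|_{\Omega} \;\leq\; \|X^\top \varepsilon\|_{\Omega^{-1}} + \|\theta^*\|_2\,\|X - \bar{X}\| + \sqrt{\rho}\,\|\theta^*\|_2$. -/

import Mathlib

open Matrix

/-- Spectral (operator) norm of a real matrix, viewed as the operator norm of the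
induced linear map between Euclidean spaces. -/
noncomputable def opNorm {n m : ℕ} (A : Matrix (Fin n) (Fin m) ℝ) : ℝ :=
  ‖LinearMap.toContinuousLinearMap (Matrix.toEuclideanLin A)‖

/-- Euclidean norm of a vector. -/
noncomputable def vecNorm {d : ℕ} (a : Fin d → ℝ) : ℝ := Real.sqrt (a ⬝ᵥ a)

/-- Weighted norm `‖a‖_Ω = sqrt (aᵀ Ω a)`. -/
noncomputable def wnorm {r : ℕ} (Ω : Matrix (Fin r) (Fin r) ℝ) (a : Fin r → ℝ) : ℝ :=
  Real.sqrt (a ⬝ᵥ (Ω *ᵥ a))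

/-- `k`-th largest singular value of a matrix, characterized as the distance (in the
spectral norm) to the set of matrices of rank `< k` (approximation numbers). -/
noncomputable def singVal {n m : ℕ} (k : ℕ) (A : Matrix (Fin n) (Fin m) ℝ) : ℝ :=
  sInf {c | ∃ B : Matrix (Fin n) (Fin m) ℝ, B.rank < k ∧ c = opNorm (A - B)}

lemma dot_self_nonneg {n : ℕ} (a : Fin n → ℝ) : 0 ≤ a ⬝ᵥ a :=
  Finset.sum_nonneg fun i _ => mul_self_nonneg _

lemma vecNorm_eq_norm {n : ℕ} (a : Fin n → ℝ) :
    vecNorm a = ‖(WithLp.equiv 2 (Fin n → ℝ)).symm a‖ := by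
  rw [EuclideanSpace.norm_eq]
  unfold vecNorm dotProduct
  congr 1
  refine Finset.sum_congr rfl fun i _ => ?_
  simp [Real.norm_eq_abs, sq_abs, sq]

lemma vecNorm_nonneg {n : ℕ} (a : Fin n → ℝ) : 0 ≤ vecNorm a := Real.sqrt_nonneg _

lemma dotProduct_le {n : ℕ} (a b : Fin n → ℝ) : a ⬝ᵥ b ≤ vecNorm a * vecNorm b := by
  have h := real_inner_le_norm ((WithLp.equiv 2 (Fin n → ℝ)).symm a)
    ((WithLp.equiv 2 (Fin n → ℝ)).symm b)
  rw [vecNorm_eq_norm, vecNorm_eq_norm]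
  refine le_trans (le_of_eq ?_) h
  simp [PiLp.inner_apply, RCLike.inner_apply, dotProduct, mul_comm]

lemma vecNorm_add_le {n : ℕ} (a b : Fin n → ℝ) :
    vecNorm (a + b) ≤ vecNorm a + vecNorm b := by
  rw [vecNorm_eq_norm, vecNorm_eq_norm, vecNorm_eq_norm]
  exact le_trans (le_of_eq (by simp)) (norm_add_le _ _)

lemma vecNorm_mulVec_le {n m : ℕ} (A : Matrix (Fin n) (Fin m) ℝ) (x : Fin m → ℝ) :
    vecNorm (A *ᵥ x) ≤ opNorm A * vecNorm x := by
  have h := (LinearMap.toContinuousLinearMap (Matrix.toEuclideanLin A)).le_opNorm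
    ((WithLp.equiv 2 (Fin m → ℝ)).symm x)
  rw [vecNorm_eq_norm, vecNorm_eq_norm]
  simpa [opNorm, Matrix.toEuclideanLin_apply_piLp_toLp] using h

open scoped MatrixOrder in
noncomputable def Matrix.PosSemidef.sqrt {r : ℕ} {M : Matrix (Fin r) (Fin r) ℝ}
    (_hM : M.PosSemidef) : Matrix (Fin r) (Fin r) ℝ := CFC.sqrt M

open scoped MatrixOrder in
lemma Matrix.PosSemidef.posSemidef_sqrt {r : ℕ} {M : Matrix (Fin r) (Fin r) ℝ}
    (hM : M.PosSemidef) : hM.sqrt.PosSemidef :=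
  (CFC.sqrt_nonneg M).posSemidef

open scoped MatrixOrder in
lemma Matrix.PosSemidef.sqrt_mul_self {r : ℕ} {M : Matrix (Fin r) (Fin r) ℝ}
    (hM : M.PosSemidef) : hM.sqrt * hM.sqrt = M :=
  CFC.sqrt_mul_sqrt_self M hM.nonneg

lemma wnorm_eq {r : ℕ} {M : Matrix (Fin r) (Fin r) ℝ} (hM : M.PosSemidef)
    (v : Fin r → ℝ) : wnorm M v = vecNorm (hM.sqrt *ᵥ v) := by
  have hs : hM.sqrtᵀ = hM.sqrt := by
    have := hM.posSemidef_sqrt.isHermitian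
    simpa [Matrix.IsHermitian, Matrix.conjTranspose_eq_transpose_of_trivial] using this
  unfold wnorm vecNorm
  congr 1
  conv_lhs => rw [← hM.sqrt_mul_self]
  rw [← Matrix.mulVec_mulVec, Matrix.dotProduct_mulVec, ← Matrix.mulVec_transpose, hs]

lemma wnorm_add_le {r : ℕ} {M : Matrix (Fin r) (Fin r) ℝ} (hM : M.PosSemidef)
    (a b : Fin r → ℝ) : wnorm M (a + b) ≤ wnorm M a + wnorm M b := by
  rw [wnorm_eq hM, wnorm_eq hM, wnorm_eq hM, Matrix.mulVec_add]
  exact vecNorm_add_le _ _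

lemma wnorm_neg {r : ℕ} (M : Matrix (Fin r) (Fin r) ℝ) (a : Fin r → ℝ) :
    wnorm M (-a) = wnorm M a := by
  simp [wnorm, Matrix.mulVec_neg]

/-- confidence bound in the `Ω`-norm for ridge regression with
errors in variables. -/
theorem stmt_6 {t d : ℕ} (Xbar X : Matrix (Fin t) (Fin d) ℝ)
    (ε : Fin t → ℝ) (θstar : Fin d → ℝ) (ρ : ℝ) (hρ : 0 < ρ)
    (y : Fin t → ℝ) (hy : y = Xbar *ᵥ θstar + ε)
    (Ω : Matrix (Fin d) (Fin d) ℝ)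
    (hΩ : Ω = ρ • (1 : Matrix (Fin d) (Fin d) ℝ) + Xᵀ * X)
    (θhat : Fin d → ℝ) (hθhat : θhat = Ω⁻¹ *ᵥ (Xᵀ *ᵥ y)) :
    wnorm Ω (θhat - θstar) ≤
      wnorm Ω⁻¹ (Xᵀ *ᵥ ε) + vecNorm θstar * opNorm (X - Xbar)
        + Real.sqrt ρ * vecNorm θstar := by
  -- positivity facts
  have hXX : (Xᵀ * X).PosSemidef := by
    have := Matrix.posSemidef_conjTranspose_mul_self X
    simpa using this
  have hsmul : (ρ • (1 : Matrix (Fin d) (Fin d) ℝ)).PosDef := by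
    rw [Matrix.smul_one_eq_diagonal]
    exact Matrix.posDef_diagonal_iff.mpr fun _ => hρ
  have hΩpd : Ω.PosDef := by rw [hΩ]; exact hsmul.add_posSemidef hXX
  have hdet : IsUnit Ω.det := (Matrix.isUnit_iff_isUnit_det Ω).mp hΩpd.isUnit
  have hinv : Ω * Ω⁻¹ = 1 := Matrix.mul_nonsing_inv Ω hdet
  have hΩinvpsd : Ω⁻¹.PosSemidef := hΩpd.inv.posSemidef
  -- quadratic form expansion : w ⬝ᵥ Ω w = ρ (w⬝w) + (Xw)⬝(Xw)
  have hquad : ∀ w : Fin d → ℝ, w ⬝ᵥ (Ω *ᵥ w) = ρ * (w ⬝ᵥ w) + (X *ᵥ w) ⬝ᵥ (X *ᵥ w) := by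
    intro w
    rw [hΩ, Matrix.add_mulVec, dotProduct_add, Matrix.smul_mulVec,
      Matrix.one_mulVec, dotProduct_smul, ← Matrix.mulVec_mulVec,
      Matrix.dotProduct_mulVec w Xᵀ, Matrix.vecMul_transpose]
    rfl
  -- key lemma A
  have keyA : ∀ u : Fin t → ℝ, wnorm Ω⁻¹ (Xᵀ *ᵥ u) ≤ vecNorm u := by
    intro u
    set w : Fin d → ℝ := Ω⁻¹ *ᵥ (Xᵀ *ᵥ u) with hw
    set s : ℝ := (Xᵀ *ᵥ u) ⬝ᵥ (Ω⁻¹ *ᵥ (Xᵀ *ᵥ u)) with hsdef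
    have hs0 : 0 ≤ s := by
      have := hΩinvpsd.dotProduct_mulVec_nonneg (Xᵀ *ᵥ u)
      simpa only [star_trivial, RCLike.re_to_real] using this
    have hΩw : Ω *ᵥ w = Xᵀ *ᵥ u := by
      rw [hw, Matrix.mulVec_mulVec, hinv, Matrix.one_mulVec]
    have hseq : s = w ⬝ᵥ (Ω *ᵥ w) := by
      rw [hsdef, ← hw, ← hΩw, dotProduct_comm]
    have hXw : (X *ᵥ w) ⬝ᵥ (X *ᵥ w) ≤ s := by
      rw [hseq, hquad w]
      nlinarith [dot_self_nonneg w]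
    have hsu : s ≤ vecNorm u * Real.sqrt s := by
      have h1 : s = u ⬝ᵥ (X *ᵥ w) := by
        rw [hsdef, ← hw, dotProduct_comm, Matrix.dotProduct_mulVec w Xᵀ,
          Matrix.vecMul_transpose, dotProduct_comm]
      have h2 : u ⬝ᵥ (X *ᵥ w) ≤ vecNorm u * vecNorm (X *ᵥ w) := dotProduct_le _ _
      have h3 : vecNorm (X *ᵥ w) ≤ Real.sqrt s := Real.sqrt_le_sqrt hXw
      calc s = u ⬝ᵥ (X *ᵥ w) := h1
        _ ≤ vecNorm u * vecNorm (X *ᵥ w) := h2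
        _ ≤ vecNorm u * Real.sqrt s :=
            mul_le_mul_of_nonneg_left h3 (vecNorm_nonneg u)
    have hgoal : wnorm Ω⁻¹ (Xᵀ *ᵥ u) = Real.sqrt s := rfl
    rw [hgoal]
    rcases (Real.sqrt_nonneg s).lt_or_eq with h | h
    · have : Real.sqrt s * Real.sqrt s ≤ vecNorm u * Real.sqrt s := by
        rw [Real.mul_self_sqrt hs0]; exact hsu
      exact le_of_mul_le_mul_right this h
    · rw [← h]; exact vecNorm_nonneg u
  -- key lemma B
  have keyB : ρ * wnorm Ω⁻¹ θstar ≤ Real.sqrt ρ * vecNorm θstar := by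
    set w : Fin d → ℝ := Ω⁻¹ *ᵥ θstar with hw
    set s : ℝ := θstar ⬝ᵥ (Ω⁻¹ *ᵥ θstar) with hsdef
    have hs0 : 0 ≤ s := by
      have := hΩinvpsd.dotProduct_mulVec_nonneg θstar
      simpa only [star_trivial, RCLike.re_to_real] using this
    have hΩw : Ω *ᵥ w = θstar := by
      rw [hw, Matrix.mulVec_mulVec, hinv, Matrix.one_mulVec]
    have hseq : s = w ⬝ᵥ (Ω *ᵥ w) := by
      rw [hsdef, ← hw, ← hΩw, dotProduct_comm]
    have hww : ρ * (w ⬝ᵥ w) ≤ s := by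
      rw [hseq, hquad w]
      nlinarith [dot_self_nonneg (X *ᵥ w)]
    have hwn : vecNorm w ≤ Real.sqrt s / Real.sqrt ρ := by
      have h1 : w ⬝ᵥ w ≤ s / ρ := by
        rw [le_div_iff₀ hρ]; linarith [hww]
      calc vecNorm w = Real.sqrt (w ⬝ᵥ w) := rfl
        _ ≤ Real.sqrt (s / ρ) := Real.sqrt_le_sqrt h1
        _ = Real.sqrt s / Real.sqrt ρ := Real.sqrt_div hs0 ρ
    have hsu : s ≤ vecNorm θstar * (Real.sqrt s / Real.sqrt ρ) := by
      have h1 : s = θstar ⬝ᵥ w := rfl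
      calc s = θstar ⬝ᵥ w := h1
        _ ≤ vecNorm θstar * vecNorm w := dotProduct_le _ _
        _ ≤ vecNorm θstar * (Real.sqrt s / Real.sqrt ρ) :=
            mul_le_mul_of_nonneg_left hwn (vecNorm_nonneg θstar)
    have hgoal : wnorm Ω⁻¹ θstar = Real.sqrt s := rfl
    rw [hgoal]
    rcases (Real.sqrt_nonneg s).lt_or_eq with h | h
    · have h2 : Real.sqrt s * Real.sqrt s ≤ (vecNorm θstar / Real.sqrt ρ) * Real.sqrt s := by
        rw [Real.mul_self_sqrt hs0]
        calc s ≤ vecNorm θstar * (Real.sqrt s / Real.sqrt ρ) := hsu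
          _ = (vecNorm θstar / Real.sqrt ρ) * Real.sqrt s := by ring
      have h3 : Real.sqrt s ≤ vecNorm θstar / Real.sqrt ρ := le_of_mul_le_mul_right h2 h
      calc ρ * Real.sqrt s ≤ ρ * (vecNorm θstar / Real.sqrt ρ) :=
            mul_le_mul_of_nonneg_left h3 (le_of_lt hρ)
        _ = (ρ / Real.sqrt ρ) * vecNorm θstar := by ring
        _ = Real.sqrt ρ * vecNorm θstar := by rw [Real.div_sqrt]
    · rw [← h, mul_zero]
      exact mul_nonneg (Real.sqrt_nonneg ρ) (vecNorm_nonneg θstar)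
  -- decomposition
  set v1 : Fin d → ℝ := Xᵀ *ᵥ ε with hv1
  set v2 : Fin d → ℝ := Xᵀ *ᵥ ((X - Xbar) *ᵥ θstar) with hv2
  set v3 : Fin d → ℝ := ρ • θstar with hv3
  have hΩdiff : Ω *ᵥ (θhat - θstar) = v1 + -v2 + -v3 := by
    have hθ : Ω *ᵥ θhat = Xᵀ *ᵥ y := by
      rw [hθhat, Matrix.mulVec_mulVec, hinv, Matrix.one_mulVec]
    rw [Matrix.mulVec_sub, hθ, hy, hΩ, hv1, hv2, hv3]
    simp only [Matrix.mulVec_add, Matrix.mulVec_sub, Matrix.sub_mulVec,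
      Matrix.add_mulVec, Matrix.smul_mulVec, Matrix.one_mulVec,
      ← Matrix.mulVec_mulVec]
    abel
  have hdiff : θhat - θstar = Ω⁻¹ *ᵥ (v1 + -v2 + -v3) := by
    rw [← hΩdiff, Matrix.mulVec_mulVec, Matrix.nonsing_inv_mul Ω hdet, Matrix.one_mulVec]
  have hCid : wnorm Ω (θhat - θstar) = wnorm Ω⁻¹ (v1 + -v2 + -v3) := by
    rw [hdiff]
    unfold wnorm
    rw [Matrix.mulVec_mulVec, hinv, Matrix.one_mulVec, dotProduct_comm]
  rw [hCid]
  have hb2 : wnorm Ω⁻¹ v2 ≤ vecNorm θstar * opNorm (X - Xbar) := by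
    calc wnorm Ω⁻¹ v2 ≤ vecNorm ((X - Xbar) *ᵥ θstar) := keyA _
      _ ≤ opNorm (X - Xbar) * vecNorm θstar := vecNorm_mulVec_le _ _
      _ = vecNorm θstar * opNorm (X - Xbar) := mul_comm _ _
  have hb3 : wnorm Ω⁻¹ v3 ≤ Real.sqrt ρ * vecNorm θstar := by
    have h1 : wnorm Ω⁻¹ v3 = ρ * wnorm Ω⁻¹ θstar := by
      unfold wnorm
      rw [hv3]
      rw [Matrix.mulVec_smul, smul_dotProduct, dotProduct_smul]
      rw [smul_eq_mul, smul_eq_mul, ← mul_assoc, ← Real.sqrt_mul_self (le_of_lt hρ)]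
      rw [show Real.sqrt (ρ * ρ) * Real.sqrt (ρ * ρ) * (θstar ⬝ᵥ Ω⁻¹ *ᵥ θstar)
          = (ρ * ρ) * (θstar ⬝ᵥ Ω⁻¹ *ᵥ θstar) by
        rw [Real.mul_self_sqrt (mul_nonneg hρ.le hρ.le)]]
      rw [Real.sqrt_mul (mul_nonneg hρ.le hρ.le), Real.sqrt_mul_self hρ.le]
    rw [h1]; exact keyB
  calc wnorm Ω⁻¹ (v1 + -v2 + -v3)
      ≤ wnorm Ω⁻¹ (v1 + -v2) + wnorm Ω⁻¹ (-v3) := wnorm_add_le hΩinvpsd _ _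
    _ ≤ wnorm Ω⁻¹ v1 + wnorm Ω⁻¹ (-v2) + wnorm Ω⁻¹ (-v3) := by
        have := wnorm_add_le hΩinvpsd v1 (-v2)
        linarith
    _ = wnorm Ω⁻¹ v1 + wnorm Ω⁻¹ v2 + wnorm Ω⁻¹ v3 := by
        rw [wnorm_neg, wnorm_neg]
    _ ≤ wnorm Ω⁻¹ v1 + vecNorm θstar * opNorm (X - Xbar) + Real.sqrt ρ * vecNorm θstar := by
        linarith [hb2, hb3]
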